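/- The key poset on weak compositions of length 3 is not a lattice: the elements a = (2,1,1) and b = (2,1,2) have two distinct maximal lower bounds, namely (1,1,1) and (1,0,1), so no greatest lower bound exists. -/
import Mathlib


/-- The key poset order. -/
def KeyLE {n : ℕ} (a b : Fin n → ℕ) : Prop :=
  (∀ i, a i ≤ b i) ∧ ∀ i j : Fin n, i < j → a j < b j → a j < a i → b j < b i

/-- Strict key order. -/
def KeyLT {n : ℕ} (a b : Fin n → ℕ) : Prop := KeyLE a b ∧ a ≠ b

/-- The key poset is not a lattice: (2,1,1) and (2,1,2) have two distinct
maximal lower bounds, (1,1,1) and (1,0,1), hence no greatest lower bound. -/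
theorem keyPoset_not_lattice :
    KeyLE ![1,1,1] ![2,1,1] ∧ KeyLE ![1,1,1] ![2,1,2] ∧
    KeyLE ![1,0,1] ![2,1,1] ∧ KeyLE ![1,0,1] ![2,1,2] ∧
    (∀ c : Fin 3 → ℕ, KeyLE c ![2,1,1] → KeyLE c ![2,1,2] →
      KeyLE ![1,1,1] c → c = ![1,1,1]) ∧
    (∀ c : Fin 3 → ℕ, KeyLE c ![2,1,1] → KeyLE c ![2,1,2] →
      KeyLE ![1,0,1] c → c = ![1,0,1]) ∧
    (![1,1,1] : Fin 3 → ℕ) ≠ ![1,0,1] ∧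
    ¬ ∃ g : Fin 3 → ℕ, KeyLE g ![2,1,1] ∧ KeyLE g ![2,1,2] ∧
        ∀ c : Fin 3 → ℕ, KeyLE c ![2,1,1] → KeyLE c ![2,1,2] → KeyLE c g := by
  have max1 : ∀ c : Fin 3 → ℕ, KeyLE c ![2,1,1] → KeyLE c ![2,1,2] →
      KeyLE ![1,1,1] c → c = ![1,1,1] := by
    intro c h1 h2 h3
    have b0 := h1.1 0; have b1 := h1.1 1; have b2 := h1.1 2
    have l0 := h3.1 0; have l1 := h3.1 1; have l2 := h3.1 2
    have key := h2.2 0 2 (by decide)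
    simp [Matrix.cons_val_zero, Matrix.cons_val_one] at b0 b1 b2 l0 l1 l2 key
    funext i; fin_cases i <;> simp <;> omega
  have max2 : ∀ c : Fin 3 → ℕ, KeyLE c ![2,1,1] → KeyLE c ![2,1,2] →
      KeyLE ![1,0,1] c → c = ![1,0,1] := by
    intro c h1 h2 h3
    have b0 := h1.1 0; have b1 := h1.1 1; have b2 := h1.1 2
    have l0 := h3.1 0; have l2 := h3.1 2
    have key := h2.2 0 2 (by decide)
    have key2 := h3.2 0 1 (by decide)
    simp [Matrix.cons_val_zero, Matrix.cons_val_one] at b0 b1 b2 l0 l2 key key2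
    funext i; fin_cases i <;> simp <;> omega
  refine ⟨by unfold KeyLE; decide, by unfold KeyLE; decide, by unfold KeyLE; decide, by unfold KeyLE; decide, max1, max2, by decide, ?_⟩
  rintro ⟨g, hg1, hg2, hglb⟩
  have e1 : g = ![1,1,1] := max1 g hg1 hg2 (hglb _ (by unfold KeyLE; decide) (by unfold KeyLE; decide))
  have e2 : g = ![1,0,1] := max2 g hg1 hg2 (hglb _ (by unfold KeyLE; decide) (by unfold KeyLE; decide))
  rw [e1] at e2
  exact absurd (congrFun e2 1) (by decide)
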